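/- arXiv:2509.00265 — 2 statements merged into one kernel-verified Lean document; each statement's English description precedes it below -/
import Mathlib

section
/- Let P be a finite partially ordered set whose Hasse diagram contains no collider, i.e., there do not exist elements a, b, c of P with a ≠ b, a ⋖ c, and b ⋖ c. Define the linear map M : ℝ^P → ℝ^P by (M f)(y) = ∑_{x ≤ y} f(x). Then M restricts to a bijection from the nonnegative orthant {f ∈ ℝ^P : f(x) ≥ 0 for all x} onto the order cone C(P). -/
open Classical in
/-- The order cone of a finite poset: nonnegative, nondecreasing real-valued functions. -/
def orderCone (P : Type*) [PartialOrder P] : Set (P → ℝ) :=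
  {f | (∀ x, 0 ≤ f x) ∧ ∀ ⦃x y : P⦄, x ≤ y → f x ≤ f y}

open Classical in
lemma mobius_sum_le_split {P : Type*} [Fintype P] [PartialOrder P] (f : P → ℝ) (y : P) :
    (∑ x : P, if x ≤ y then f x else 0)
      = f y + ∑ x : P, if x < y then f x else 0 := by
  have h : ∀ x : P, (if x ≤ y then f x else 0)
      = (if x = y then f x else 0) + (if x < y then f x else 0) := by
    intro x
    by_cases h1 : x = y
    · subst h1; simp
    · by_cases h2 : x < y
      · simp [h1, h2, le_of_lt h2]
      · have : ¬ x ≤ y := fun h => (h.lt_or_eq).elim h2 h1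
        simp [h1, h2, this]
  simp_rw [h, Finset.sum_add_distrib, Finset.sum_ite_eq' Finset.univ y f, Finset.mem_univ,
    if_true]

open Classical in
/-- for a finite poset with no collider in its Hasse diagram, the Möbius
transform `(M f)(y) = ∑_{x ≤ y} f(x)` maps the nonnegative orthant bijectively onto the
order cone `C(P)`. -/
theorem mobius_bijOn_orthant_orderCone
    (P : Type*) [Fintype P] [PartialOrder P]
    (hnc : ¬ ∃ a b c : P, a ≠ b ∧ a ⋖ c ∧ b ⋖ c) :
    Set.BijOn (fun (f : P → ℝ) (y : P) => ∑ x : P, if x ≤ y then f x else 0)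
      {f : P → ℝ | ∀ x, 0 ≤ f x} (orderCone P) := by
  have huniq : ∀ {a b c : P}, a ⋖ c → b ⋖ c → a = b := by
    intro a b c ha hb
    by_contra hne
    exact hnc ⟨a, b, c, hne, ha, hb⟩
  refine ⟨?_, ?_, ?_⟩
  · -- maps to
    intro f hf
    refine ⟨fun y => Finset.sum_nonneg fun x _ => ?_, fun y₁ y₂ h12 => ?_⟩
    · by_cases hx : x ≤ y
      · simp [hx, hf x]
      · simp [hx]
    · apply Finset.sum_le_sum
      intro x _
      by_cases hx : x ≤ y₁
      · simp [hx, hx.trans h12]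
      · by_cases hx2 : x ≤ y₂ <;> simp [hx, hx2, hf x]
  · -- injective
    intro f _ g _ h
    funext y
    induction y using WellFoundedLT.induction with
    | ind y IH =>
      have h1 : (∑ x : P, if x ≤ y then f x else 0) = ∑ x : P, if x ≤ y then g x else 0 :=
        congrFun h y
      rw [mobius_sum_le_split, mobius_sum_le_split] at h1
      have h2 : (∑ x : P, if x < y then f x else 0) = ∑ x : P, if x < y then g x else 0 := by
        apply Finset.sum_congr rfl
        intro x _
        by_cases hx : x < y
        · simp [hx, IH x hx]
        · simp [hx]
      linarith
  · -- surjective onto the order cone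
    rintro g ⟨hg0, hgmono⟩
    set f : P → ℝ := fun y => g y - (if h : ∃ z : P, z ⋖ y then g h.choose else 0) with hfdef
    have hf0 : ∀ x, 0 ≤ f x := by
      intro x
      rw [hfdef]
      by_cases h : ∃ z : P, z ⋖ x
      · simp only [h, dif_pos]
        have := hgmono (h.choose_spec.lt.le)
        linarith
      · simp [h, hg0 x]
    refine ⟨f, hf0, ?_⟩
    funext y
    induction y using WellFoundedLT.induction with
    | ind y IH =>
      have IH' : ∀ z : P, z < y → (∑ x : P, if x ≤ z then f x else 0) = g z := IH
      show (∑ x : P, if x ≤ y then f x else 0) = g y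
      rw [mobius_sum_le_split]
      by_cases h : ∃ z : P, z ⋖ y
      · obtain hz := h.choose_spec
        set z := h.choose
        have hiff : ∀ x : P, x < y ↔ x ≤ z := by
          intro x
          constructor
          · intro hxy
            obtain ⟨w, hxw, hwy⟩ := exists_le_covBy_of_lt hxy
            rwa [huniq hwy hz] at hxw
          · intro hxz
            exact lt_of_le_of_lt hxz hz.lt
        have hsum : (∑ x : P, if x < y then f x else 0)
            = ∑ x : P, if x ≤ z then f x else 0 := by
          apply Finset.sum_congr rfl
          intro x _
          simp [hiff x]
        rw [hsum, IH' z hz.lt]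
        have hfy : f y = g y - g z := by simp [hfdef, h]; rfl
        rw [hfy]; ring
      · have hsum : (∑ x : P, if x < y then f x else 0) = 0 := by
          apply Finset.sum_eq_zero
          intro x _
          have hx : ¬ x < y := by
            intro hxy
            obtain ⟨w, _, hwy⟩ := exists_le_covBy_of_lt hxy
            exact h ⟨w, hwy⟩
          simp [hx]
        rw [hsum]
        have hfy : f y = g y := by simp [hfdef, h]
        rw [hfy]; ring
end

section
/- Let R : {1,…,p₁} × {1,…,p₂} → ℝ be an entrywise-nonnegative matrix and define its cumulative-sum matrix F : {1,…,p₁} × {1,…,p₂} → ℝ by F(i,j) = ∑_{i' ≤ i} ∑_{j' ≤ j} R(i',j'). Then for every r ∈ ℕ, R admits a factorization R(i,j) = ∑_{l=1}^r u_l(i)·w_l(j) with all u_l and w_l entrywise nonnegative if and only if F admits a factorization F(i,j) = ∑_{l=1}^r a_l(i)·b_l(j) with each a_l : {1,…,p₁} → ℝ and each b_l : {1,…,p₂} → ℝ nonnegative and nondecreasing. Consequently the nonnegative rank of R equals the ND rank of F with respect to the chain orders on {1,…,p₁} and {1,…,p₂}. -/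
/-- Discrete backward difference on `Fin p`. -/
noncomputable def dpred {p : ℕ} (a : Fin p → ℝ) (i : Fin p) : ℝ :=
  a i - (if _ : i.val = 0 then 0 else a ⟨i.val - 1, lt_of_le_of_lt (Nat.sub_le _ _) i.isLt⟩)

lemma dpred_nonneg {p : ℕ} (a : Fin p → ℝ) (h0 : ∀ i, 0 ≤ a i) (hm : Monotone a)
    (i : Fin p) : 0 ≤ dpred a i := by
  unfold dpred
  split
  · simpa using h0 i
  · have : a ⟨i.val - 1, lt_of_le_of_lt (Nat.sub_le _ _) i.isLt⟩ ≤ a i :=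
      hm (by simp [Fin.le_def])
    linarith

lemma telescope {p : ℕ} (a : Fin p → ℝ) (i : Fin p) :
    ∑ i' ∈ Finset.Iic i, dpred a i' = a i := by
  have key : ∀ n : ℕ, ∀ i : Fin p, i.val = n → ∑ i' ∈ Finset.Iic i, dpred a i' = a i := by
    intro n
    induction n using Nat.strong_induction_on with
    | _ n ih =>
      intro i hi
      match n, hi with
      | 0, hi =>
        have hset : Finset.Iic i = {i} := by
          ext j
          simp only [Finset.mem_Iic, Finset.mem_singleton, Fin.le_def, Fin.ext_iff]
          omega
        rw [hset, Finset.sum_singleton]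
        unfold dpred
        rw [dif_pos hi]; ring
      | (k+1), hi =>
        have hk : k < p := by omega
        set ip : Fin p := ⟨k, hk⟩ with hip
        have herase : (Finset.Iic i).erase i = Finset.Iic ip := by
          ext j
          simp only [Finset.mem_erase, Finset.mem_Iic, Fin.le_def, Fin.ext_iff, ne_eq, hip, Fin.val_mk]
          omega
        rw [← Finset.add_sum_erase _ _ (Finset.mem_Iic.mpr le_rfl), herase,
          ih k (by omega) ip rfl]
        unfold dpred
        rw [dif_neg (by omega)]
        have : (⟨i.val - 1, lt_of_le_of_lt (Nat.sub_le _ _) i.isLt⟩ : Fin p) = ip := by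
          simp [Fin.ext_iff, hip]; omega
        rw [this]; ring
  exact key i.val i rfl

lemma prefix_zero {p₁ p₂ : ℕ} (D : Fin p₁ → Fin p₂ → ℝ)
    (h : ∀ i j, ∑ i' ∈ Finset.Iic i, ∑ j' ∈ Finset.Iic j, D i' j' = 0) :
    ∀ i j, D i j = 0 := by
  have key : ∀ n : ℕ, ∀ i j, i.val + j.val = n → D i j = 0 := by
    intro n
    induction n using Nat.strong_induction_on with
    | _ n ih =>
      intro i j hij
      have h0 := h i j
      rw [← Finset.sum_product'] at h0
      have hmem : (i, j) ∈ Finset.Iic i ×ˢ Finset.Iic j := by simp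
      rw [← Finset.add_sum_erase _ _ hmem] at h0
      have hz : ∑ x ∈ (Finset.Iic i ×ˢ Finset.Iic j).erase (i, j), D x.1 x.2 = 0 := by
        apply Finset.sum_eq_zero
        intro x hx
        simp only [Finset.mem_erase, Finset.mem_product, Finset.mem_Iic, ne_eq,
          Prod.ext_iff] at hx
        obtain ⟨hne, h1, h2⟩ := hx
        apply ih (x.1.val + x.2.val) _ x.1 x.2 rfl
        have h1' : x.1.val ≤ i.val := h1
        have h2' : x.2.val ≤ j.val := h2
        rcases Nat.lt_or_ge (x.1.val + x.2.val) n with hlt | hge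
        · exact hlt
        · exact absurd ⟨Fin.ext (by omega), Fin.ext (by omega)⟩ hne
      rw [hz, add_zero] at h0
      exact h0
  intro i j
  exact key (i.val + j.val) i j rfl

lemma double_sum_prod {p₁ p₂ r : ℕ} (u : Fin r → Fin p₁ → ℝ) (w : Fin r → Fin p₂ → ℝ)
    (i : Fin p₁) (j : Fin p₂) :
    ∑ i' ∈ Finset.Iic i, ∑ j' ∈ Finset.Iic j, ∑ l, u l i' * w l j'
      = ∑ l, (∑ i' ∈ Finset.Iic i, u l i') * (∑ j' ∈ Finset.Iic j, w l j') := by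
  calc ∑ i' ∈ Finset.Iic i, ∑ j' ∈ Finset.Iic j, ∑ l, u l i' * w l j'
      = ∑ i' ∈ Finset.Iic i, ∑ l, ∑ j' ∈ Finset.Iic j, u l i' * w l j' :=
        Finset.sum_congr rfl fun _ _ => Finset.sum_comm
    _ = ∑ l, ∑ i' ∈ Finset.Iic i, ∑ j' ∈ Finset.Iic j, u l i' * w l j' := Finset.sum_comm
    _ = ∑ l, (∑ i' ∈ Finset.Iic i, u l i') * (∑ j' ∈ Finset.Iic j, w l j') := by
        simp_rw [Finset.sum_mul, Finset.mul_sum]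

/-- `S` admits a nonnegative factorization with `r` terms. -/
def HasNNFact {I₁ I₂ : Type*} (S : I₁ → I₂ → ℝ) (r : ℕ) : Prop :=
  ∃ (u : Fin r → I₁ → ℝ) (w : Fin r → I₂ → ℝ),
    (∀ i x, 0 ≤ u i x) ∧ (∀ i y, 0 ≤ w i y) ∧
    ∀ x y, S x y = ∑ i, u i x * w i y

/-- `F` admits a factorization with `r` terms into products of nonnegative nondecreasing
vectors (an ND factorization with respect to the chain orders). -/
def HasChainNDFact {p₁ p₂ : ℕ} (F : Fin p₁ → Fin p₂ → ℝ) (r : ℕ) : Prop :=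
  ∃ (a : Fin r → Fin p₁ → ℝ) (b : Fin r → Fin p₂ → ℝ),
    (∀ l, (∀ i, 0 ≤ a l i) ∧ Monotone (a l)) ∧
    (∀ l, (∀ j, 0 ≤ b l j) ∧ Monotone (b l)) ∧
    ∀ i j, F i j = ∑ l, a l i * b l j

/-- a nonnegative matrix `R` has a nonnegative factorization with `r` terms
iff its cumulative-sum matrix `F` has an ND factorization (w.r.t. the chain orders) with
`r` terms; hence the nonnegative rank of `R` equals the ND rank of `F`. -/
theorem nnRank_eq_NDrank_of_cdf
    (p₁ p₂ : ℕ) (R : Fin p₁ → Fin p₂ → ℝ) (hR : ∀ i j, 0 ≤ R i j)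
    (F : Fin p₁ → Fin p₂ → ℝ)
    (hF : ∀ i j, F i j = ∑ i' ∈ Finset.Iic i, ∑ j' ∈ Finset.Iic j, R i' j') :
    (∀ r : ℕ, HasNNFact R r ↔ HasChainNDFact F r) ∧
    sInf {r : ℕ | HasNNFact R r} = sInf {r : ℕ | HasChainNDFact F r} := by
  have main : ∀ r : ℕ, HasNNFact R r ↔ HasChainNDFact F r := by
    intro r
    constructor
    · rintro ⟨u, w, hu, hw, huw⟩
      refine ⟨fun l i => ∑ i' ∈ Finset.Iic i, u l i',
             fun l j => ∑ j' ∈ Finset.Iic j, w l j', ?_, ?_, ?_⟩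
      · intro l
        refine ⟨fun i => Finset.sum_nonneg fun i' _ => hu l i', ?_⟩
        intro i i' hii
        exact Finset.sum_le_sum_of_subset_of_nonneg (Finset.Iic_subset_Iic.mpr hii)
          (fun k _ _ => hu l k)
      · intro l
        refine ⟨fun j => Finset.sum_nonneg fun j' _ => hw l j', ?_⟩
        intro j j' hjj
        exact Finset.sum_le_sum_of_subset_of_nonneg (Finset.Iic_subset_Iic.mpr hjj)
          (fun k _ _ => hw l k)
      · intro i j
        rw [hF i j, ← double_sum_prod]
        exact Finset.sum_congr rfl fun i' _ => Finset.sum_congr rfl fun j' _ => huw i' j'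
    · rintro ⟨a, b, ha, hb, hab⟩
      refine ⟨fun l => dpred (a l), fun l => dpred (b l), ?_, ?_, ?_⟩
      · exact fun l i => dpred_nonneg (a l) (ha l).1 (ha l).2 i
      · exact fun l j => dpred_nonneg (b l) (hb l).1 (hb l).2 j
      · have hz : ∀ i j,
            ∑ i' ∈ Finset.Iic i, ∑ j' ∈ Finset.Iic j,
              (R i' j' - ∑ l, dpred (a l) i' * dpred (b l) j') = 0 := by
          intro i j
          simp only [Finset.sum_sub_distrib]
          rw [double_sum_prod, ← hF i j, hab i j]
          simp_rw [telescope]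
          ring
        intro i j
        have := prefix_zero _ hz i j
        linarith
  refine ⟨main, ?_⟩
  congr 1
  ext r
  exact main r
end
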